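/- (Orthonormality of kernel translates) For every p ∈ ℝ^m and all q, q' ∈ Q = {−2π/3, 0, 2π/3}^m, ∫_{[−π,π]^m} K̃(p+q, z)·K̃(p+q', z) dz equals (2π/3)^m if q = q' and equals 0 otherwise. -/

import Mathlib

open MeasureTheory Real Finset

noncomputable section

/-- `Ω = {-1,0,1}^m` as a finite set of integer vectors. -/
def Omega (m : ℕ) : Finset (Fin m → ℤ) := Finset.Icc (-1) 1

/-- `ωᵀz = ∑ j, ω j * z j`. -/
def dotIZ {m : ℕ} (ω : Fin m → ℤ) (z : Fin m → ℝ) : ℝ := ∑ j, (ω j : ℝ) * z j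

/-- A function `g : ℝ^m → ℝ` lies in `H` if it has a Fourier representation with
frequencies in `Ω = {-1,0,1}^m` and coefficients satisfying `c (-ω) = conj (c ω)`. -/
def IsInH (m : ℕ) (g : (Fin m → ℝ) → ℝ) : Prop :=
  ∃ c : (Fin m → ℤ) → ℂ,
    (∀ ω ∈ Omega m, c (-ω) = starRingEnd ℂ (c ω)) ∧
    ∀ z : Fin m → ℝ, (g z : ℂ) =
      ∑ ω ∈ Omega m, c ω * Complex.exp (Complex.I * ((dotIZ ω z : ℝ) : ℂ))

/-- The kernel `K̃(x,z) = ∏ j, (1 + 2 cos (x j - z j)) / 3`. -/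
def Ktilde (m : ℕ) (x z : Fin m → ℝ) : ℝ :=
  ∏ j, (1 + 2 * Real.cos (x j - z j)) / 3

/-- The grid `Q = {-2π/3, 0, 2π/3}^m` as a finite set of real vectors. -/
def Qgrid (m : ℕ) : Finset (Fin m → ℝ) :=
  (Omega m).image (fun ω j => 2 * π / 3 * (ω j : ℝ))

/-- The set of points of `Q` having at most `L` non-zero entries. -/
def QgridL (m L : ℕ) : Finset (Fin m → ℝ) :=
  (Qgrid m).filter (fun q => (Finset.univ.filter (fun j => q j ≠ 0)).card ≤ L)

/-- The cube `[-π, π]^m`. -/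
def cube (m : ℕ) : Set (Fin m → ℝ) := Set.pi Set.univ fun _ : Fin m => Set.Icc (-π) π

lemma oneDim (a b : ℝ) :
    ∫ x in Set.Icc (-π) π, ((1 + 2 * Real.cos (a - x)) / 3) * ((1 + 2 * Real.cos (b - x)) / 3)
      = 2 * π * (1 + 2 * Real.cos (a - b)) / 9 := by
  have hle : (-π : ℝ) ≤ π := by linarith [Real.pi_pos]
  rw [MeasureTheory.integral_Icc_eq_integral_Ioc,
    ← intervalIntegral.integral_of_le hle]
  set F : ℝ → ℝ := fun x =>
    (x + 2 * Real.cos (a - b) * x - 2 * Real.sin (a - x) - 2 * Real.sin (b - x)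
      - Real.sin (a + b - 2 * x)) / 9 with hFdef
  have hF : ∀ x : ℝ, HasDerivAt F
      (((1 + 2 * Real.cos (a - x)) / 3) * ((1 + 2 * Real.cos (b - x)) / 3)) x := by
    intro x
    have h1 : HasDerivAt (fun x : ℝ => a - x) (-1) x := by
      simpa using (hasDerivAt_id x).const_sub a
    have h2 : HasDerivAt (fun x : ℝ => b - x) (-1) x := by
      simpa using (hasDerivAt_id x).const_sub b
    have h3 : HasDerivAt (fun x : ℝ => a + b - 2 * x) (-2) x := by
      simpa using ((hasDerivAt_id x).const_mul 2).const_sub (a + b)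
    have hd := (((((hasDerivAt_id x).add
        ((hasDerivAt_id x).const_mul (2 * Real.cos (a - b)))).sub
        ((h1.sin).const_mul 2)).sub ((h2.sin).const_mul 2)).sub h3.sin).div_const 9
    refine HasDerivAt.congr_deriv (f := F) hd ?_
    have h1' := Real.cos_sub (a - x) (b - x)
    have h2' := Real.cos_add (a - x) (b - x)
    rw [show a - x - (b - x) = a - b by ring] at h1'
    rw [show a - x + (b - x) = a + b - 2 * x by ring] at h2'
    nlinarith [h1', h2']
  have hcont : Continuous fun x : ℝ =>
      ((1 + 2 * Real.cos (a - x)) / 3) * ((1 + 2 * Real.cos (b - x)) / 3) := by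
    fun_prop
  rw [intervalIntegral.integral_eq_sub_of_hasDerivAt (fun x _ => hF x)
    (hcont.intervalIntegrable _ _)]
  simp only [hFdef]
  rw [show a - -π = a + π by ring, show b - -π = b + π by ring,
    show a + b - 2 * -π = (a + b) + 2 * π by ring,
    show a + b - 2 * π = ((a + b) - π) - π by ring,
    Real.sin_add_two_pi, Real.sin_sub_pi, Real.sin_sub_pi, Real.sin_sub_pi, Real.sin_sub_pi,
    Real.sin_add_pi, Real.sin_add_pi]
  ring

lemma cos_two_pi_div_three : Real.cos (2 * π / 3) = -(1 / 2) := by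
  rw [show 2 * π / 3 = π - π / 3 by ring, Real.cos_pi_sub, Real.cos_pi_div_three]

lemma cos_four_pi_div_three : Real.cos (4 * π / 3) = -(1 / 2) := by
  rw [show 4 * π / 3 = π / 3 + π by ring, Real.cos_add_pi, Real.cos_pi_div_three]

theorem stmt_4 (m : ℕ) (hm : 0 < m) (p q q' : Fin m → ℝ)
    (hq : ∀ j, q j ∈ ({-(2 * π / 3), 0, 2 * π / 3} : Set ℝ))
    (hq' : ∀ j, q' j ∈ ({-(2 * π / 3), 0, 2 * π / 3} : Set ℝ)) :
    ∫ z in cube m, Ktilde m (p + q) z * Ktilde m (p + q') z =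
      if q = q' then (2 * π / 3) ^ m else 0 := by
  set g : Fin m → ℝ → ℝ := fun j x =>
    ((1 + 2 * Real.cos (p j + q j - x)) / 3) * ((1 + 2 * Real.cos (p j + q' j - x)) / 3)
    with hg
  have hcube : MeasurableSet (cube m) :=
    MeasurableSet.univ_pi fun _ => measurableSet_Icc
  have step1 : ∫ z in cube m, Ktilde m (p + q) z * Ktilde m (p + q') z
      = ∏ j, ∫ x in Set.Icc (-π) π, g j x := by
    rw [← MeasureTheory.integral_indicator hcube]
    have hind : ∀ z : Fin m → ℝ,
        (cube m).indicator (fun z => Ktilde m (p + q) z * Ktilde m (p + q') z) z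
          = ∏ j, (Set.Icc (-π) π).indicator (g j) (z j) := by
      intro z
      by_cases hz : z ∈ cube m
      · rw [Set.indicator_of_mem hz]
        have : Ktilde m (p + q) z * Ktilde m (p + q') z = ∏ j, g j (z j) := by
          simp only [Ktilde, hg, ← Finset.prod_mul_distrib, Pi.add_apply]
        rw [this]
        exact Finset.prod_congr rfl fun j _ =>
          (Set.indicator_of_mem (hz j (Set.mem_univ j)) _).symm
      · rw [Set.indicator_of_notMem hz]
        have : ∃ j, z j ∉ Set.Icc (-π) π := by
          by_contra h
          push_neg at h
          exact hz fun j _ => h j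
        obtain ⟨j, hj⟩ := this
        exact (Finset.prod_eq_zero (Finset.mem_univ j)
          (Set.indicator_of_notMem hj _)).symm
    rw [show ((cube m).indicator fun z => Ktilde m (p + q) z * Ktilde m (p + q') z)
        = fun z => ∏ j, (Set.Icc (-π) π).indicator (g j) (z j) from funext hind,
      MeasureTheory.integral_fintype_prod_volume_eq_prod
        (fun j => (Set.Icc (-π) π).indicator (g j))]
    exact Finset.prod_congr rfl fun j _ => MeasureTheory.integral_indicator measurableSet_Icc
  have step2 : ∀ j, ∫ x in Set.Icc (-π) π, g j x
      = 2 * π * (1 + 2 * Real.cos (q j - q' j)) / 9 := by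
    intro j
    rw [hg]
    rw [oneDim (p j + q j) (p j + q' j), show p j + q j - (p j + q' j) = q j - q' j by ring]
  rw [step1]
  by_cases hqq : q = q'
  · subst hqq
    rw [if_pos rfl]
    have : ∀ j, ∫ x in Set.Icc (-π) π, g j x = 2 * π / 3 := by
      intro j
      rw [step2 j, sub_self, Real.cos_zero]
      ring
    rw [Finset.prod_congr rfl fun j _ => this j, Finset.prod_const, Finset.card_univ,
      Fintype.card_fin]
  · rw [if_neg hqq]
    have : ∃ j, q j ≠ q' j := by
      by_contra h
      push_neg at h
      exact hqq (funext h)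
    obtain ⟨j, hj⟩ := this
    refine Finset.prod_eq_zero (Finset.mem_univ j) ?_
    have hc : Real.cos (q j - q' j) = -(1 / 2) := by
      have hpi : π ≠ 0 := Real.pi_ne_zero
      rcases hq j with h1 | h1 | h1 <;> rcases hq' j with h2 | h2 | h2 <;>
        (try simp only [Set.mem_singleton_iff] at h1 h2) <;>
        first
        | (exact absurd (h1.trans h2.symm) hj)
        | (rw [h1, h2, show -(2 * π / 3) - 0 = -(2 * π / 3) by ring, Real.cos_neg,
            cos_two_pi_div_three])
        | (rw [h1, h2, show -(2 * π / 3) - 2 * π / 3 = -(4 * π / 3) by ring, Real.cos_neg,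
            cos_four_pi_div_three])
        | (rw [h1, h2, show (0 : ℝ) - -(2 * π / 3) = 2 * π / 3 by ring, cos_two_pi_div_three])
        | (rw [h1, h2, show (0 : ℝ) - 2 * π / 3 = -(2 * π / 3) by ring, Real.cos_neg,
            cos_two_pi_div_three])
        | (rw [h1, h2, show 2 * π / 3 - -(2 * π / 3) = 4 * π / 3 by ring,
            cos_four_pi_div_three])
        | (rw [h1, h2, show 2 * π / 3 - 0 = 2 * π / 3 by ring, cos_two_pi_div_three])
    rw [step2 j, hc]
    ring
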